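/- arXiv:1903.05332 — 2 statements merged into one kernel-verified Lean document; each statement's English description precedes it below -/
import Mathlib

section
/- Let D be an acyclic bipartite tournament with bipartition (V_1,V_2), sink sequence (W_0,...,W_{\zeta(D)}), and let m be a positive integer with m < \zeta(D), and \mathcal{W}_m = W_0 \cup ... \cup W_{m-1}. Then two distinct vertices are adjacent in C^m(D) iff both lie in V_1 \setminus \mathcal{W}_m or both lie in V_2 \setminus \mathcal{W}_m; in particular C^m(D) is isomorphic to the disjoint union of two complete graphs and isolated vertices. -/
/-- `walkN D n u v` : there is a directed walk of length `n` from `u` to `v` in the digraph `D`. -/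
def walkN {V : Type*} (D : V → V → Prop) : ℕ → V → V → Prop
  | 0 => fun u v => u = v
  | n+1 => fun u v => ∃ w, D u w ∧ walkN D n w v

/-- The `m`-step competition graph of the digraph `D`. -/
def cmGraph {V : Type*} (D : V → V → Prop) (m : ℕ) : SimpleGraph V where
  Adj u v := u ≠ v ∧ ∃ z, walkN D m u z ∧ walkN D m v z
  symm := by
    constructor
    intro u v h
    exact ⟨Ne.symm h.1, h.2.imp fun z hz => ⟨hz.2, hz.1⟩⟩
  loopless := by constructor; intro v h; exact h.1 rfl

/-- Sinks of the subdigraph of `D` induced by `S`. -/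
def sinks {V : Type*} (D : V → V → Prop) (S : Set V) : Set V :=
  {v ∈ S | ∀ w ∈ S, ¬ D v w}

/-- The digraph sequence `D_0, D_1, …` (as vertex sets) associated with the sink sequence. -/
def Dseq {V : Type*} (D : V → V → Prop) : ℕ → Set V
  | 0 => Set.univ
  | n+1 => Dseq D n \ sinks D (Dseq D n)

/-- The sink sequence `W_0, W_1, …` of `D`. -/
def Wseq {V : Type*} (D : V → V → Prop) (n : ℕ) : Set V := sinks D (Dseq D n)

/-- `k` is the sink elimination index `ζ(D)`. -/
def IsSinkElimIndex {V : Type*} (D : V → V → Prop) (k : ℕ) : Prop :=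
  (Wseq D k = Dseq D k ∨ Wseq D k = ∅) ∧
  ∀ j < k, Wseq D j ≠ Dseq D j ∧ Wseq D j ≠ ∅

/-- A digraph is acyclic iff it has no directed closed walk of positive length. -/
def DigraphAcyclic {V : Type*} (D : V → V → Prop) : Prop :=
  ∀ v : V, ∀ n : ℕ, 0 < n → ¬ walkN D n v v

/-- `D` is a bipartite tournament with bipartition `(V1, V2)`. -/
structure IsBipartiteTournament {V : Type*} (D : V → V → Prop) (V1 V2 : Set V) : Prop where
  nonempty1 : V1.Nonempty
  nonempty2 : V2.Nonempty
  union_eq : V1 ∪ V2 = Set.univ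
  disj : V1 ∩ V2 = ∅
  oriented : ∀ x ∈ V1, ∀ y ∈ V2, Xor' (D x y) (D y x)
  no_intra : ∀ x y, D x y → (x ∈ V1 ∧ y ∈ V2) ∨ (x ∈ V2 ∧ y ∈ V1)

/-- The competition graph sequence of `D` is eventually equal, starting from `q`. -/
def PeriodicFrom {V : Type*} (D : V → V → Prop) (q : ℕ) : Prop :=
  ∃ r, 0 < r ∧ ∀ i : ℕ, cmGraph D (q + i) = cmGraph D (q + r + i)

/-- `q` is the competition index of `D`. -/
def IsCindex {V : Type*} (D : V → V → Prop) (q : ℕ) : Prop :=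
  0 < q ∧ PeriodicFrom D q ∧ ∀ q', 0 < q' → PeriodicFrom D q' → q ≤ q'

/-- `p` is the competition period of `D`, given that `q` is its competition index. -/
def IsCperiod {V : Type*} (D : V → V → Prop) (q p : ℕ) : Prop :=
  0 < p ∧ cmGraph D q = cmGraph D (q + p) ∧
    ∀ p', 0 < p' → cmGraph D q = cmGraph D (q + p') → p ≤ p'

section lemmas
variable {V : Type*} (D : V → V → Prop)

lemma walkN_snoc :
    ∀ n u w z, walkN D n u w → D w z → walkN D (n+1) u z := by
  intro n
  induction n with
  | zero => intro u w z h hz; cases h; exact ⟨z, hz, rfl⟩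
  | succ n ih =>
    intro u w z h hz
    obtain ⟨x, hx, hw⟩ := h
    exact ⟨x, hx, ih x w z hw hz⟩

lemma Dseq_eq :
    ∀ n, Dseq D n = Set.univ \ ⋃ i ∈ Finset.range n, Wseq D i := by
  intro n
  induction n with
  | zero => simp [Dseq]
  | succ n ih =>
    have h1 : Dseq D (n+1) = (Set.univ \ ⋃ i ∈ Finset.range n, Wseq D i) \ Wseq D n := by
      rw [show Dseq D (n+1) = Dseq D n \ Wseq D n from rfl, ih]
    rw [h1]
    ext x
    simp only [Set.mem_diff, Set.mem_univ, true_and, Set.mem_iUnion, Finset.mem_range,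
      Nat.lt_succ_iff_lt_or_eq]
    constructor
    · rintro ⟨h2, h3⟩ ⟨i, hi | rfl, hx⟩
      · exact h2 ⟨i, hi, hx⟩
      · exact h3 hx
    · intro h
      exact ⟨fun ⟨i, hi, hx⟩ => h ⟨i, Or.inl hi, hx⟩, fun hx => h ⟨n, Or.inr rfl, hx⟩⟩

lemma sink_no_walk :
    ∀ i, ∀ n u z, u ∈ Wseq D i → i < n → ¬ walkN D n u z := by
  intro i
  induction i using Nat.strong_induction_on with
  | _ i ih =>
    intro n u z hu hn hw
    obtain ⟨n', rfl⟩ : ∃ n', n = n' + 1 := ⟨n - 1, by omega⟩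
    obtain ⟨x, hx, hw'⟩ := hw
    have hxD : x ∉ Dseq D i := fun h => hu.2 x h hx
    rw [Dseq_eq] at hxD
    simp only [Set.mem_diff, Set.mem_univ, true_and, not_not, Set.mem_iUnion,
      Finset.mem_range] at hxD
    obtain ⟨j, hj, hxW⟩ := hxD
    exact ih j hj n' x z hxW (by omega) hw'

lemma descend :
    ∀ t u, u ∈ Dseq D (t+1) → ∃ w, w ∈ Dseq D 1 ∧ walkN D t u w := by
  intro t
  induction t with
  | zero => intro u hu; exact ⟨u, hu, rfl⟩
  | succ t ih =>
    intro u hu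
    have hu1 : u ∈ Dseq D (t+1) := hu.1
    have hns : u ∉ sinks D (Dseq D (t+1)) := hu.2
    have : ∃ x ∈ Dseq D (t+1), D u x := by
      by_contra h
      push_neg at h
      exact hns ⟨hu1, h⟩
    obtain ⟨x, hx, hux⟩ := this
    obtain ⟨w, hw1, hw2⟩ := ih x hx
    exact ⟨w, hw1, x, hux, hw2⟩

variable {V1 V2 : Set V}

lemma mem_V2_iff (hD : IsBipartiteTournament D V1 V2) : ∀ x : V, x ∈ V2 ↔ x ∉ V1 := by
  intro x
  constructor
  · intro h2 h1
    exact absurd (hD.disj ▸ (show x ∈ V1 ∩ V2 from ⟨h1, h2⟩)) (Set.notMem_empty x)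
  · intro h1
    rcases (hD.union_eq ▸ Set.mem_univ x : x ∈ V1 ∪ V2) with h | h
    · exact absurd h h1
    · exact h

lemma walkN_parity (hD : IsBipartiteTournament D V1 V2) :
    ∀ n u w, walkN D n u w → (w ∈ V1 ↔ (u ∈ V1 ↔ Even n)) := by
  intro n
  induction n with
  | zero => intro u w h; cases h; simp
  | succ n ih =>
    intro u w h
    obtain ⟨x, hx, hw⟩ := h
    have h1 := ih x w hw
    have h2 : x ∈ V1 ↔ u ∉ V1 := by
      rcases hD.no_intra u x hx with ⟨hu, hx'⟩ | ⟨hu, hx'⟩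
      · simp [(mem_V2_iff D hD x).mp hx', hu]
      · simp [hx', (mem_V2_iff D hD u).mp hu]
    have h3 : Even (n+1) ↔ ¬ Even n := Nat.even_add_one
    rw [h1, h2, h3]
    tauto

/-- An arc from any vertex of `Dseq D j` of the opposite part into a sink of `Dseq D j`. -/
lemma arc_to_sink (hD : IsBipartiteTournament D V1 V2) (j : ℕ) (w z : V) (hw : w ∈ Dseq D j) (hz : z ∈ Wseq D j)
    (hop : (w ∈ V1 ∧ z ∈ V2) ∨ (w ∈ V2 ∧ z ∈ V1)) : D w z := by
  have hnz : ¬ D z w := hz.2 w hw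
  rcases hop with ⟨h1, h2⟩ | ⟨h1, h2⟩
  · rcases hD.oriented w h1 z h2 with ⟨h, _⟩ | ⟨h, _⟩
    · exact h
    · exact absurd h hnz
  · rcases hD.oriented z h2 w h1 with ⟨h, _⟩ | ⟨h, _⟩
    · exact absurd h hnz
    · exact h

end lemmas

theorem cmGraph_below_zeta_aux {V : Type*} (D : V → V → Prop)
    (V1 V2 : Set V) (hD : IsBipartiteTournament D V1 V2)
    (k : ℕ)
    (hk2 : ∀ j < k, Wseq D j ≠ Dseq D j ∧ Wseq D j ≠ ∅)
    (m : ℕ) (hm : 0 < m) (hmk : m < k) :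
    ∀ u v : V, (u ≠ v ∧ ∃ z, walkN D m u z ∧ walkN D m v z) ↔ u ≠ v ∧
      ((u ∈ V1 \ ⋃ i ∈ Finset.range m, Wseq D i ∧
        v ∈ V1 \ ⋃ i ∈ Finset.range m, Wseq D i) ∨
       (u ∈ V2 \ ⋃ i ∈ Finset.range m, Wseq D i ∧
        v ∈ V2 \ ⋃ i ∈ Finset.range m, Wseq D i)) := by
  have hV2 := mem_V2_iff D hD
  -- pick sinks z0 ∈ W_0, z1 ∈ W_1, in opposite parts
  obtain ⟨z0, hz0⟩ := Set.nonempty_iff_ne_empty.mpr (hk2 0 (by omega)).2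
  obtain ⟨z1, hz1⟩ := Set.nonempty_iff_ne_empty.mpr (hk2 1 (by omega)).2
  -- z1 has an out-neighbor y which is in W_0
  have hz1D1 : z1 ∈ Dseq D 1 := hz1.1
  have hz1ns : z1 ∉ sinks D (Dseq D 0) := hz1D1.2
  have hy : ∃ y, D z1 y := by
    by_contra h
    push_neg at h
    exact hz1ns ⟨Set.mem_univ z1, fun w _ => h w⟩
  obtain ⟨y, hy⟩ := hy
  have hyW0 : y ∈ Wseq D 0 := by
    have : y ∉ Dseq D 1 := fun h => hz1.2 y h hy
    have hy0 : y ∈ Dseq D 0 := Set.mem_univ y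
    by_contra h
    exact this ⟨hy0, h⟩
  -- sinks of D_0 are all in the same part
  have same_part_W0 : ∀ a ∈ Wseq D 0, ∀ b ∈ Wseq D 0, (a ∈ V1 ↔ b ∈ V1) := by
    intro a ha b hb
    by_contra h
    have hab : (a ∈ V1 ∧ b ∈ V2) ∨ (a ∈ V2 ∧ b ∈ V1) := by
      rcases Classical.em (a ∈ V1) with h1 | h1
      · exact Or.inl ⟨h1, (hV2 b).mpr (fun hb1 => h (by tauto))⟩
      · exact Or.inr ⟨(hV2 a).mpr h1, by tauto⟩
    rcases hab with ⟨h1, h2⟩ | ⟨h1, h2⟩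
    · rcases hD.oriented a h1 b h2 with ⟨hd, _⟩ | ⟨hd, _⟩
      · exact ha.2 b (Set.mem_univ b) hd
      · exact hb.2 a (Set.mem_univ a) hd
    · rcases hD.oriented b h2 a h1 with ⟨hd, _⟩ | ⟨hd, _⟩
      · exact hb.2 a (Set.mem_univ a) hd
      · exact ha.2 b (Set.mem_univ b) hd
  -- z1 is in the opposite part to z0
  have hopp : z1 ∈ V1 ↔ z0 ∉ V1 := by
    have h1 : (z1 ∈ V1 ∧ y ∈ V2) ∨ (z1 ∈ V2 ∧ y ∈ V1) := hD.no_intra z1 y hy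
    have h2 := same_part_W0 y hyW0 z0 hz0
    rcases h1 with ⟨ha, hb⟩ | ⟨ha, hb⟩
    · have := (hV2 y).mp hb; tauto
    · have := (hV2 z1).mp ha; tauto
  intro u v
  constructor
  · rintro ⟨hne, z, hu, hv⟩
    refine ⟨hne, ?_⟩
    have hum : u ∉ ⋃ i ∈ Finset.range m, Wseq D i := by
      intro h
      simp only [Set.mem_iUnion, Finset.mem_range] at h
      obtain ⟨i, hi, hW⟩ := h
      exact sink_no_walk D i m u z hW hi hu
    have hvm : v ∉ ⋃ i ∈ Finset.range m, Wseq D i := by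
      intro h
      simp only [Set.mem_iUnion, Finset.mem_range] at h
      obtain ⟨i, hi, hW⟩ := h
      exact sink_no_walk D i m v z hW hi hv
    have pu := walkN_parity D hD m u z hu
    have pv := walkN_parity D hD m v z hv
    have same : u ∈ V1 ↔ v ∈ V1 := by tauto
    rcases Classical.em (u ∈ V1) with h1 | h1
    · exact Or.inl ⟨⟨h1, hum⟩, ⟨same.mp h1, hvm⟩⟩
    · exact Or.inr ⟨⟨(hV2 u).mpr h1, hum⟩, ⟨(hV2 v).mpr (fun h => h1 (same.mpr h)), hvm⟩⟩
  · rintro ⟨hne, hcase⟩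
    refine ⟨hne, ?_⟩
    -- both u, v in D_m, same part
    have key : ∀ w : V, w ∉ ⋃ i ∈ Finset.range m, Wseq D i → w ∈ Dseq D m := by
      intro w hw
      rw [Dseq_eq]
      exact ⟨Set.mem_univ w, hw⟩
    have same : u ∈ V1 ↔ v ∈ V1 := by
      rcases hcase with ⟨⟨h1, _⟩, ⟨h2, _⟩⟩ | ⟨⟨h1, _⟩, ⟨h2, _⟩⟩
      · tauto
      · have := (hV2 u).mp h1; have := (hV2 v).mp h2; tauto
    have huD : u ∈ Dseq D m := by rcases hcase with ⟨⟨_, h⟩, _⟩ | ⟨⟨_, h⟩, _⟩ <;> exact key u h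
    have hvD : v ∈ Dseq D m := by rcases hcase with ⟨_, ⟨_, h⟩⟩ | ⟨_, ⟨_, h⟩⟩ <;> exact key v h
    obtain ⟨m', rfl⟩ : ∃ m', m = m' + 1 := ⟨m - 1, by omega⟩
    obtain ⟨wu, hwu1, hwu2⟩ := descend D m' u huD
    obtain ⟨wv, hwv1, hwv2⟩ := descend D m' v hvD
    have pu := walkN_parity D hD m' u wu hwu2
    have pv := walkN_parity D hD m' v wv hwv2
    have samew : wu ∈ V1 ↔ wv ∈ V1 := by rw [pu, pv, same]
    -- pick the right sink target depending on the part of wu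
    rcases Classical.em (z0 ∈ V1) with hz0p | hz0p
    · rcases Classical.em (wu ∈ V1) with hwp | hwp
      · -- wu, wv ∈ V1, z0 ∈ V1 : use z1 ∈ V2
        have hz1p : z1 ∈ V2 := (hV2 z1).mpr (by tauto)
        refine ⟨z1, walkN_snoc D m' u wu z1 hwu2 ?_, walkN_snoc D m' v wv z1 hwv2 ?_⟩
        · exact arc_to_sink D hD 1 wu z1 hwu1 hz1 (Or.inl ⟨hwp, hz1p⟩)
        · exact arc_to_sink D hD 1 wv z1 hwv1 hz1 (Or.inl ⟨samew.mp hwp, hz1p⟩)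
      · -- wu, wv ∈ V2, z0 ∈ V1 : use z0
        refine ⟨z0, walkN_snoc D m' u wu z0 hwu2 ?_, walkN_snoc D m' v wv z0 hwv2 ?_⟩
        · exact arc_to_sink D hD 0 wu z0 (Set.mem_univ wu) hz0
            (Or.inr ⟨(hV2 wu).mpr hwp, hz0p⟩)
        · exact arc_to_sink D hD 0 wv z0 (Set.mem_univ wv) hz0
            (Or.inr ⟨(hV2 wv).mpr (fun h => hwp (samew.mpr h)), hz0p⟩)
    · rcases Classical.em (wu ∈ V1) with hwp | hwp
      · -- wu, wv ∈ V1, z0 ∈ V2 : use z0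
        have hz0p2 : z0 ∈ V2 := (hV2 z0).mpr hz0p
        refine ⟨z0, walkN_snoc D m' u wu z0 hwu2 ?_, walkN_snoc D m' v wv z0 hwv2 ?_⟩
        · exact arc_to_sink D hD 0 wu z0 (Set.mem_univ wu) hz0 (Or.inl ⟨hwp, hz0p2⟩)
        · exact arc_to_sink D hD 0 wv z0 (Set.mem_univ wv) hz0 (Or.inl ⟨samew.mp hwp, hz0p2⟩)
      · -- wu, wv ∈ V2, z0 ∈ V2 : use z1 ∈ V1
        have hz1p : z1 ∈ V1 := hopp.mpr hz0p
        refine ⟨z1, walkN_snoc D m' u wu z1 hwu2 ?_, walkN_snoc D m' v wv z1 hwv2 ?_⟩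
        · exact arc_to_sink D hD 1 wu z1 hwu1 hz1 (Or.inr ⟨(hV2 wu).mpr hwp, hz1p⟩)
        · exact arc_to_sink D hD 1 wv z1 hwv1 hz1
            (Or.inr ⟨(hV2 wv).mpr (fun h => hwp (samew.mpr h)), hz1p⟩)


/-- For an acyclic bipartite tournament and a positive `m < ζ(D)`, two distinct
vertices are adjacent in `C^m(D)` iff both lie in `V1 \ 𝒲_m` or both lie in `V2 \ 𝒲_m`,
where `𝒲_m = W_0 ∪ ⋯ ∪ W_{m-1}`. -/
theorem cmGraph_below_zeta {V : Type*} [Fintype V] (D : V → V → Prop)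
    (V1 V2 : Set V) (hD : IsBipartiteTournament D V1 V2)
    (hacyc : DigraphAcyclic D)
    (k : ℕ) (hk : IsSinkElimIndex D k)
    (m : ℕ) (hm : 0 < m) (hmk : m < k) :
    ∀ u v : V, (cmGraph D m).Adj u v ↔ u ≠ v ∧
      ((u ∈ V1 \ ⋃ i ∈ Finset.range m, Wseq D i ∧
        v ∈ V1 \ ⋃ i ∈ Finset.range m, Wseq D i) ∨
       (u ∈ V2 \ ⋃ i ∈ Finset.range m, Wseq D i ∧
        v ∈ V2 \ ⋃ i ∈ Finset.range m, Wseq D i)) := by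
  intro u v
  exact cmGraph_below_zeta_aux D V1 V2 hD k hk.2 m hm hmk u v
end

section
/- Let D be a bipartite tournament with bipartition (V_1,V_2) and no sinks, and let m >= 2 be an integer. Then for each i in {1,2}, the subgraph of C^m(D) induced by V_i is a complete graph or a (not necessarily disjoint) union of two complete graphs. -/
section Aux

variable {V : Type*} {D : V → V → Prop}

lemma walkN_exists (hnosink : ∀ v : V, ∃ w, D v w) :
    ∀ (n : ℕ) (v : V), ∃ z, walkN D n v z
  | 0, v => ⟨v, rfl⟩
  | n+1, v => by
    obtain ⟨w, hw⟩ := hnosink v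
    obtain ⟨z, hz⟩ := walkN_exists hnosink n w
    exact ⟨z, w, hw, hz⟩

lemma walkN_append : ∀ {a : ℕ} {b : ℕ} {u w z : V},
    walkN D a u w → walkN D b w z → walkN D (a + b) u z := by
  intro a
  induction a with
  | zero =>
    intro b u w z h1 h2
    have h : u = w := h1
    rw [Nat.zero_add]
    exact h ▸ h2
  | succ a ih =>
    intro b u w z h1 h2
    obtain ⟨x, hux, h1'⟩ := h1
    rw [Nat.succ_add]
    exact ⟨x, hux, ih h1' h2⟩

lemma adj_of_common (hnosink : ∀ v : V, ∃ w, D v w) {m k : ℕ} (hk : k ≤ m)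
    {u v z : V} (hne : u ≠ v) (hu : walkN D k u z) (hv : walkN D k v z) :
    (cmGraph D m).Adj u v := by
  obtain ⟨z', hz'⟩ := walkN_exists hnosink (m - k) z
  have h : k + (m - k) = m := Nat.add_sub_cancel' hk
  refine ⟨hne, z', ?_, ?_⟩
  · rw [← h]; exact walkN_append hu hz'
  · rw [← h]; exact walkN_append hv hz'

lemma adj_two_step (hnosink : ∀ v : V, ∃ w, D v w) {m : ℕ} (hm : 2 ≤ m) {s t x y c : V}
    (hst : s ≠ t) (hsx : D s x) (hxc : D x c) (hty : D t y) (hyc : D y c) :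
    (cmGraph D m).Adj s t :=
  adj_of_common hnosink hm hst ⟨x, hsx, c, hxc, rfl⟩ ⟨y, hty, c, hyc, rfl⟩

lemma adj_trans_sub {m : ℕ} (hm : 1 ≤ m) {s t c : V} (hsub : ∀ y, D t y → D c y)
    (hadj : (cmGraph D m).Adj s t) (hsc : s ≠ c) : (cmGraph D m).Adj s c := by
  obtain ⟨-, z, hs, ht⟩ := hadj
  obtain ⟨k, rfl⟩ : ∃ k, m = k + 1 := ⟨m - 1, (Nat.succ_pred_eq_of_pos hm).symm⟩
  obtain ⟨y, hty, hy⟩ := ht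
  exact ⟨hsc, z, hs, y, hsub y hty, hy⟩

lemma not_common_out (hnosink : ∀ v : V, ∃ w, D v w) {m : ℕ} (hm : 1 ≤ m) {u v x : V}
    (hne : u ≠ v) (hnadj : ¬ (cmGraph D m).Adj u v) (hux : D u x) : ¬ D v x :=
  fun hvx => hnadj (adj_of_common hnosink hm hne ⟨x, hux, rfl⟩ ⟨x, hvx, rfl⟩)

lemma not_sub_nbr (hnosink : ∀ v : V, ∃ w, D v w) {m : ℕ} (hm : 1 ≤ m) {u v : V}
    (hne : u ≠ v) (hnadj : ¬ (cmGraph D m).Adj u v)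
    (hsub : ∀ x, D u x → D v x) : False := by
  obtain ⟨x, hx⟩ := hnosink u
  exact not_common_out hnosink hm hne hnadj hx (hsub x hx)

variable {V1 V2 : Set V}

lemma mem_other (hD : IsBipartiteTournament D V1 V2) {u x : V}
    (hu : u ∈ V1) (hux : D u x) : x ∈ V2 := by
  rcases hD.no_intra u x hux with ⟨-, h⟩ | ⟨h, -⟩
  · exact h
  · exact absurd (Set.mem_inter hu h : u ∈ V1 ∩ V2) (by rw [hD.disj]; exact Set.notMem_empty u)

lemma edge_or (hD : IsBipartiteTournament D V1 V2) {u x : V}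
    (hu : u ∈ V1) (hx : x ∈ V2) (h : ¬ D u x) : D x u := by
  rcases hD.oriented u hu x hx with ⟨h1, -⟩ | ⟨h1, -⟩
  · exact absurd h1 h
  · exact h1

lemma lemM (hD : IsBipartiteTournament D V1 V2) (hnosink : ∀ v : V, ∃ w, D v w)
    {m : ℕ} (hm : 2 ≤ m) {u v s t : V}
    (hu : u ∈ V1) (hv : v ∈ V1) (hs : s ∈ V1) (ht : t ∈ V1)
    (huv : u ≠ v) (hst : s ≠ t)
    (hnuv : ¬ (cmGraph D m).Adj u v) (hnst : ¬ (cmGraph D m).Adj s t) :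
    ((∀ x, D s x → D u x) ∧ (∀ y, D t y → D v y)) ∨
    ((∀ x, D s x → D v x) ∧ (∀ y, D t y → D u y)) := by
  have hm1 : 1 ≤ m := le_trans one_le_two hm
  have Buv : ∀ x, D u x → D x v := by
    intro x h
    have hx2 : x ∈ V2 := mem_other hD hu h
    have hnvx : ¬ D v x := not_common_out hnosink hm1 huv hnuv h
    exact edge_or hD hv hx2 hnvx
  have Bvu : ∀ x, D v x → D x u := by
    intro x h
    have hx2 : x ∈ V2 := mem_other hD hv h
    have hnux : ¬ D u x := fun h' => not_common_out hnosink hm1 huv hnuv h' h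
    exact edge_or hD hu hx2 hnux
  have step1 : ∀ x, D s x → D u x ∨ D v x := by
    intro x hsx
    by_contra hcon
    push_neg at hcon
    obtain ⟨hnux, hnvx⟩ := hcon
    have hx2 : x ∈ V2 := mem_other hD hs hsx
    have hxu : D x u := edge_or hD hu hx2 hnux
    have hxv : D x v := edge_or hD hv hx2 hnvx
    obtain ⟨y, hty⟩ := hnosink t
    have hy2 : y ∈ V2 := mem_other hD ht hty
    by_cases huy : D u y
    · exact hnst (adj_two_step hnosink hm hst hsx hxv hty (Buv y huy))
    · exact hnst (adj_two_step hnosink hm hst hsx hxu hty (edge_or hD hu hy2 huy))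
  have step1' : ∀ y, D t y → D u y ∨ D v y := by
    intro y hty
    by_contra hcon
    push_neg at hcon
    obtain ⟨hnuy, hnvy⟩ := hcon
    have hy2 : y ∈ V2 := mem_other hD ht hty
    have hyu : D y u := edge_or hD hu hy2 hnuy
    have hyv : D y v := edge_or hD hv hy2 hnvy
    obtain ⟨x, hsx⟩ := hnosink s
    have hx2 : x ∈ V2 := mem_other hD hs hsx
    by_cases hux : D u x
    · exact hnst (adj_two_step hnosink hm hst hsx (Buv x hux) hty hyv)
    · exact hnst (adj_two_step hnosink hm hst hsx (edge_or hD hu hx2 hux) hty hyu)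
  have step2 : (∀ x, D s x → D u x) ∨ (∀ x, D s x → D v x) := by
    by_contra hcon
    push_neg at hcon
    obtain ⟨⟨x1, hsx1, hnux1⟩, ⟨x2, hsx2, hnvx2⟩⟩ := hcon
    have hvx1 : D v x1 := (step1 x1 hsx1).resolve_left hnux1
    have hux2 : D u x2 := (step1 x2 hsx2).resolve_right hnvx2
    obtain ⟨y, hty⟩ := hnosink t
    rcases step1' y hty with huy | hvy
    · exact hnst (adj_two_step hnosink hm hst hsx2 (Buv x2 hux2) hty (Buv y huy))
    · exact hnst (adj_two_step hnosink hm hst hsx1 (Bvu x1 hvx1) hty (Bvu y hvy))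
  have step2' : (∀ y, D t y → D u y) ∨ (∀ y, D t y → D v y) := by
    by_contra hcon
    push_neg at hcon
    obtain ⟨⟨y1, hty1, hnuy1⟩, ⟨y2, hty2, hnvy2⟩⟩ := hcon
    have hvy1 : D v y1 := (step1' y1 hty1).resolve_left hnuy1
    have huy2 : D u y2 := (step1' y2 hty2).resolve_right hnvy2
    obtain ⟨x, hsx⟩ := hnosink s
    rcases step1 x hsx with hux | hvx
    · exact hnst (adj_two_step hnosink hm hst hsx (Buv x hux) hty2 (Buv y2 huy2))
    · exact hnst (adj_two_step hnosink hm hst hsx (Bvu x hvx) hty1 (Bvu y1 hvy1))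
  rcases step2 with h1 | h1 <;> rcases step2' with h2 | h2
  · obtain ⟨x, hsx⟩ := hnosink s
    obtain ⟨y, hty⟩ := hnosink t
    exact absurd (adj_two_step hnosink hm hst hsx (Buv x (h1 x hsx)) hty (Buv y (h2 y hty))) hnst
  · exact Or.inl ⟨h1, h2⟩
  · exact Or.inr ⟨h1, h2⟩
  · obtain ⟨x, hsx⟩ := hnosink s
    obtain ⟨y, hty⟩ := hnosink t
    exact absurd (adj_two_step hnosink hm hst hsx (Bvu x (h1 x hsx)) hty (Bvu y (h2 y hty))) hnst

lemma IsBipartiteTournament.swap (hD : IsBipartiteTournament D V1 V2) :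
    IsBipartiteTournament D V2 V1 := by
  refine ⟨hD.nonempty2, hD.nonempty1, by rw [Set.union_comm]; exact hD.union_eq,
    by rw [Set.inter_comm]; exact hD.disj, ?_, fun x y h => (hD.no_intra x y h).symm⟩
  intro x hx y hy
  rcases hD.oriented y hy x hx with ⟨h1, h2⟩ | ⟨h1, h2⟩
  · exact Or.inr ⟨h1, h2⟩
  · exact Or.inl ⟨h1, h2⟩

lemma main_part (D : V → V → Prop) (V1 V2 : Set V)
    (hD : IsBipartiteTournament D V1 V2) (hnosink : ∀ v : V, ∃ w, D v w)
    (m : ℕ) (hm : 2 ≤ m) :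
    (cmGraph D m).IsClique V1 ∨
      ∃ A B : Set V, A ∪ B = V1 ∧ (cmGraph D m).IsClique A ∧ (cmGraph D m).IsClique B ∧
        ∀ u ∈ V1, ∀ v ∈ V1, (cmGraph D m).Adj u v →
          (u ∈ A ∧ v ∈ A) ∨ (u ∈ B ∧ v ∈ B) := by
  have hm1 : 1 ≤ m := le_trans one_le_two hm
  by_cases hcl : (cmGraph D m).IsClique V1
  · exact Or.inl hcl
  right
  rw [SimpleGraph.isClique_iff] at hcl
  simp only [Set.Pairwise, not_forall] at hcl
  obtain ⟨u0, hu0, v0, hv0, hne0, hnadj0⟩ := hcl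
  have hnadj0' : ¬ (cmGraph D m).Adj v0 u0 := fun h => hnadj0 h.symm
  set A : Set V := {s | s ∈ V1 ∧ (s = u0 ∨ (cmGraph D m).Adj s u0)} with hA
  set B : Set V := {s | s ∈ V1 ∧ (s = v0 ∨ (cmGraph D m).Adj s v0)} with hB
  have hAclique : (cmGraph D m).IsClique A := by
    rintro s ⟨hs1, hsA⟩ t ⟨ht1, htA⟩ hst
    by_contra hn
    rcases lemM hD hnosink hm hu0 hv0 hs1 ht1 hne0 hst hnadj0 hn with ⟨-, h2⟩ | ⟨h1, -⟩
    · rcases htA with rfl | hadj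
      · exact not_sub_nbr hnosink hm1 hne0 hnadj0 h2
      · exact hnadj0 (adj_trans_sub hm1 h2 hadj.symm hne0)
    · rcases hsA with rfl | hadj
      · exact not_sub_nbr hnosink hm1 hne0 hnadj0 h1
      · exact hnadj0 (adj_trans_sub hm1 h1 hadj.symm hne0)
  have hBclique : (cmGraph D m).IsClique B := by
    rintro s ⟨hs1, hsB⟩ t ⟨ht1, htB⟩ hst
    by_contra hn
    rcases lemM hD hnosink hm hu0 hv0 hs1 ht1 hne0 hst hnadj0 hn with ⟨h1, -⟩ | ⟨-, h2⟩
    · rcases hsB with rfl | hadj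
      · exact not_sub_nbr hnosink hm1 hne0.symm hnadj0' h1
      · exact hnadj0' (adj_trans_sub hm1 h1 hadj.symm hne0.symm)
    · rcases htB with rfl | hadj
      · exact not_sub_nbr hnosink hm1 hne0.symm hnadj0' h2
      · exact hnadj0' (adj_trans_sub hm1 h2 hadj.symm hne0.symm)
  have hcover : A ∪ B = V1 := by
    apply Set.Subset.antisymm
    · rintro s (⟨h, -⟩ | ⟨h, -⟩) <;> exact h
    · intro s hs1
      by_cases h1 : s = u0 ∨ (cmGraph D m).Adj s u0
      · exact Or.inl ⟨hs1, h1⟩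
      by_cases h2 : s = v0 ∨ (cmGraph D m).Adj s v0
      · exact Or.inr ⟨hs1, h2⟩
      push_neg at h1 h2
      obtain ⟨hsu, hnu⟩ := h1
      obtain ⟨hsv, hnv⟩ := h2
      exfalso
      have hNs_v0 : ∀ x, D s x → D v0 x := by
        rcases lemM hD hnosink hm hu0 hv0 hs1 hu0 hne0 hsu hnadj0 hnu with ⟨-, h⟩ | ⟨h, -⟩
        · exact absurd h (fun h' => not_sub_nbr hnosink hm1 hne0 hnadj0 h')
        · exact h
      have hNs_u0 : ∀ x, D s x → D u0 x := by
        rcases lemM hD hnosink hm hu0 hv0 hs1 hv0 hne0 hsv hnadj0 hnv with ⟨h, -⟩ | ⟨-, h⟩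
        · exact h
        · exact absurd h (fun h' => not_sub_nbr hnosink hm1 hne0.symm hnadj0' h')
      obtain ⟨x, hsx⟩ := hnosink s
      exact hnadj0 (adj_of_common hnosink hm1 hne0
        ⟨x, hNs_u0 x hsx, rfl⟩ ⟨x, hNs_v0 x hsx, rfl⟩)
  have hcross : ∀ s, s ∈ V1 → ∀ t, t ∈ V1 → (cmGraph D m).Adj s t → s ∈ A → t ∉ A → s ∈ B := by
    intro s hs1 t ht1 hadj hsA htA
    by_contra hsB
    have hsv : s ≠ v0 ∧ ¬ (cmGraph D m).Adj s v0 := by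
      have h : ¬ (s = v0 ∨ (cmGraph D m).Adj s v0) := fun h => hsB ⟨hs1, h⟩
      push_neg at h
      exact h
    have htu : t ≠ u0 ∧ ¬ (cmGraph D m).Adj t u0 := by
      have h : ¬ (t = u0 ∨ (cmGraph D m).Adj t u0) := fun h => htA ⟨ht1, h⟩
      push_neg at h
      exact h
    rcases lemM hD hnosink hm hs1 hv0 ht1 hu0 hsv.1 htu.1 hsv.2 htu.2 with ⟨-, h⟩ | ⟨h, -⟩
    · exact not_sub_nbr hnosink hm1 hne0 hnadj0 h
    · exact hsv.2 (adj_trans_sub hm1 h hadj hsv.1)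
  refine ⟨A, B, hcover, hAclique, hBclique, ?_⟩
  intro u hu v hv hadj
  have huAB : u ∈ A ∪ B := by rw [hcover]; exact hu
  have hvAB : v ∈ A ∪ B := by rw [hcover]; exact hv
  by_cases huA : u ∈ A <;> by_cases hvA : v ∈ A
  · exact Or.inl ⟨huA, hvA⟩
  · exact Or.inr ⟨hcross u hu v hv hadj huA hvA, hvAB.resolve_left hvA⟩
  · exact Or.inr ⟨huAB.resolve_left huA, hcross v hv u hu hadj.symm hvA huA⟩
  · exact Or.inr ⟨huAB.resolve_left huA, hvAB.resolve_left hvA⟩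

end Aux

/-- For a bipartite tournament without sinks and `m ≥ 2`, the subgraph of
`C^m(D)` induced by each partite set is a complete graph or a (not necessarily disjoint)
union of two complete graphs. -/
theorem induced_parts_union_of_two_cliques {V : Type*} [Fintype V] (D : V → V → Prop)
    (V1 V2 : Set V) (hD : IsBipartiteTournament D V1 V2)
    (hnosink : ∀ v : V, ∃ w : V, D v w)
    (m : ℕ) (hm : 2 ≤ m) :
    ∀ P ∈ ({V1, V2} : Set (Set V)),
      (cmGraph D m).IsClique P ∨
      ∃ A B : Set V, A ∪ B = P ∧ (cmGraph D m).IsClique A ∧ (cmGraph D m).IsClique B ∧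
        ∀ u ∈ P, ∀ v ∈ P, (cmGraph D m).Adj u v →
          (u ∈ A ∧ v ∈ A) ∨ (u ∈ B ∧ v ∈ B) := by
  
  intro P hP
  simp only [Set.mem_insert_iff, Set.mem_singleton_iff] at hP
  rcases hP with rfl | rfl
  · exact main_part D _ _ hD hnosink m hm
  · exact main_part D _ _ hD.swap hnosink m hm
end
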